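/- arXiv:1810.05522 — 2 statements merged into one kernel-verified Lean document; each statement's English description precedes it below -/
import Mathlib

section
/- Let m ≥ 1 with 2m < N. A diagonal restricted Dicke state ρ = Σ_{k=0}^{N(d−1)} p_k |R_{N,d;k}⟩⟨R_{N,d;k}| (p_k ≥ 0) is m-PPT if and only if the matrices (p_{i+j+l})_{i,j=0}^{m(d−1)} are positive semidefinite for every l = 0, 1, …, (N−2m)(d−1). -/
open scoped BigOperators ComplexConjugate ComplexOrder Matrix
noncomputable section
open MeasureTheory

namespace DSym

/-- Index set of the computational basis of `(ℂ^d)^{⊗N}`. -/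
abbrev Idx (d N : ℕ) := Fin N → Fin d

/-- `|i| = i_1 + ⋯ + i_N`. -/
def wsum {d N : ℕ} (i : Idx d N) : ℕ := ∑ j, (i j : ℕ)

/-- `C(N,k)_d = #{i ∈ {0,…,d−1}^N : |i| = k}`. -/
def Ccount (d N k : ℕ) : ℕ := (Finset.univ.filter (fun i : Idx d N => wsum i = k)).card

/-- The D-symmetrizator `P_D`. -/
def PD (d N : ℕ) : Matrix (Idx d N) (Idx d N) ℂ :=
  Matrix.of fun i j => if wsum i = wsum j then ((Ccount d N (wsum j) : ℂ))⁻¹ else 0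

/-- The symmetrizator `P_S`. -/
def PS (d N : ℕ) : Matrix (Idx d N) (Idx d N) ℂ :=
  Matrix.of fun i j =>
    ((N.factorial : ℂ))⁻¹ *
      ((Finset.univ.filter (fun σ : Equiv.Perm (Fin N) => i = fun k => j (σ k))).card : ℂ)

/-- The product state `|ξ^1⟩⟨ξ^1| ⊗ ⋯ ⊗ |ξ^N⟩⟨ξ^N|` as a matrix. -/
def prodProj {d N : ℕ} (ξ : Fin N → (Fin d → ℂ)) : Matrix (Idx d N) (Idx d N) ℂ :=
  Matrix.of fun i i' => ∏ j, ξ j (i j) * conj (ξ j (i' j))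

/-- Full separability of a multipartite state. -/
def FullySep {d N : ℕ} (ρ : Matrix (Idx d N) (Idx d N) ℂ) : Prop :=
  ∃ (n : ℕ) (lam : Fin n → ℝ) (ξ : Fin n → Fin N → (Fin d → ℂ)),
    (∀ α, 0 < lam α) ∧ (∀ α j, ∑ x, Complex.normSq (ξ α j x) = 1) ∧
      ρ = ∑ α, (lam α : ℂ) • prodProj (ξ α)

/-- The restricted Dicke vector `|R_{N,d;k}⟩`. -/
def Rvec (d N k : ℕ) : Idx d N → ℂ := fun i => if wsum i = k then 1 else 0

/-- The rank-one operator `|R_{N,d;k}⟩⟨R_{N,d;k}|`. -/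
def RProj (d N k : ℕ) : Matrix (Idx d N) (Idx d N) ℂ :=
  Matrix.vecMulVec (Rvec d N k) (star (Rvec d N k))

/-- Diagonal restricted Dicke state with coefficients `p`. -/
def dickeDiag (d N : ℕ) (p : ℕ → ℝ) : Matrix (Idx d N) (Idx d N) ℂ :=
  ∑ k ∈ Finset.range (N * (d - 1) + 1), (p k : ℂ) • RProj d N k

/-- Partial transposition of the first `m` tensor factors (entrywise). -/
def Gamma {d N : ℕ} (m : ℕ) (ρ : Matrix (Idx d N) (Idx d N) ℂ) :
    Matrix (Idx d N) (Idx d N) ℂ :=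
  Matrix.of fun i j =>
    ρ (fun k => if (k : ℕ) < m then j k else i k) (fun k => if (k : ℕ) < m then i k else j k)

/-- D-symmetry of a state: `ρ = P_D ρ P_D`. -/
def IsDSymm {d N : ℕ} (ρ : Matrix (Idx d N) (Idx d N) ℂ) : Prop :=
  ρ = PD d N * ρ * PD d N

/-- A pure fully separable D-symmetric state `σ = (|ξ⟩⟨ξ|)^{⊗N}`, `ξ` a unit vector. -/
def PureDSymmProd {d N : ℕ} (σ : Matrix (Idx d N) (Idx d N) ℂ) : Prop :=
  ∃ ξ : Fin d → ℂ,
    (∑ x, Complex.normSq (ξ x) = 1) ∧ σ = prodProj (fun _ : Fin N => ξ) ∧ IsDSymm σ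

/-- Entanglement witness for the D-symmetric system. -/
def IsDWitness {d N : ℕ} (W : Matrix (Idx d N) (Idx d N) ℂ) : Prop :=
  W.IsHermitian ∧ W = PD d N * W * PD d N ∧
    ∀ σ : Matrix (Idx d N) (Idx d N) ℂ, PureDSymmProd σ → 0 ≤ (W * σ).trace

/-- The dual restricted Dicke vector. -/
def Rtilde (d N k : ℕ) : Idx d N → ℂ := ((Ccount d N k : ℂ))⁻¹ • Rvec d N k

/-- Solution of the generalized moment problem on `[0,∞)`. -/
def IsGenMomentSolution (n : ℕ) (p : ℕ → ℝ) : Prop :=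
  ∃ (σ : Measure ℝ) (M : ℝ), IsFiniteMeasure σ ∧ σ {x | x < 0} = 0 ∧
    (∀ k ≤ n, Integrable (fun t => t ^ k) σ) ∧ 0 ≤ M ∧
    (∀ k < n, p k = ∫ t, t ^ k ∂σ) ∧ p n = (∫ t, t ^ n ∂σ) + M

/-- Solution of the strict moment problem on `[0,∞)`. -/
def IsStrictMomentSolution (n : ℕ) (p : ℕ → ℝ) : Prop :=
  ∃ σ : Measure ℝ, IsFiniteMeasure σ ∧ σ {x | x < 0} = 0 ∧
    (∀ k ≤ n, Integrable (fun t => t ^ k) σ) ∧ (∀ k ≤ n, p k = ∫ t, t ^ k ∂σ)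


/-- The normalization constant `C_z = (Σ_{i=0}^{d−1} |z|^{2i})^{−1/2}`. -/
def Cz (d : ℕ) (z : ℂ) : ℝ := (∑ j ∈ Finset.range d, ‖z‖ ^ (2 * j)) ^ (-(1/2 : ℝ))

/-- The vector `ζ_z = C_z Σ_{i=0}^{d−1} z^i |i⟩`. -/
def zeta (d : ℕ) (z : ℂ) : Fin d → ℂ := fun i => (Cz d z : ℂ) * z ^ (i : ℕ)

/-- The basis vector `|d−1⟩`. -/
def topVec (d : ℕ) : Fin d → ℂ := fun x => if (x : ℕ) = d - 1 then 1 else 0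

/-- Sum of the first `m` coordinates of a tuple. -/
def wsumFirst {d N : ℕ} (m : ℕ) (i : Idx d N) : ℕ :=
  ∑ j ∈ Finset.univ.filter (fun j : Fin N => (j : ℕ) < m), (i j : ℕ)

/-- Sum of the last `N − m` coordinates of a tuple. -/
def wsumLast {d N : ℕ} (m : ℕ) (i : Idx d N) : ℕ :=
  ∑ j ∈ Finset.univ.filter (fun j : Fin N => m ≤ (j : ℕ)), (i j : ℕ)

/-- The vector `|R_{m,d;a}⟩ ⊗ |R_{N−m,d;b}⟩`, viewed inside `(ℂ^d)^{⊗N}`. -/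
def splitVec (d N m : ℕ) (a b : ℤ) : Idx d N → ℂ :=
  fun i => if (wsumFirst m i : ℤ) = a ∧ (wsumLast m i : ℤ) = b then 1 else 0

/-- The operator `A_s` from the decomposition of `Γ_m(ρ)`. -/
def Amat (d N m : ℕ) (p : ℕ → ℝ) (s : ℤ) : Matrix (Idx d N) (Idx d N) ℂ :=
  ∑ k ∈ Finset.Icc (max 0 (-s)) (min ((m : ℤ) * ((d : ℤ) - 1)) ((((N : ℤ) - (m : ℤ)) * ((d : ℤ) - 1)) - s)),
  ∑ l ∈ Finset.Icc (max 0 (-s)) (min ((m : ℤ) * ((d : ℤ) - 1)) ((((N : ℤ) - (m : ℤ)) * ((d : ℤ) - 1)) - s)),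
    (p (k + l + s).toNat : ℂ) •
      Matrix.vecMulVec (splitVec d N m k (k + s)) (star (splitVec d N m l (l + s)))

/-- The permutation unitary `F_σ`, `F_σ|ξ_1,…,ξ_N⟩ = |ξ_{σ⁻¹(1)},…,ξ_{σ⁻¹(N)}⟩`. -/
def Fmat (d N : ℕ) (σ : Equiv.Perm (Fin N)) : Matrix (Idx d N) (Idx d N) ℂ :=
  Matrix.of fun x i => if x = fun k => i (σ.symm k) then 1 else 0

/-- Partial transposition with respect to the binary string `b`. -/
def partialT {d N : ℕ} (b : Fin N → Bool) (ρ : Matrix (Idx d N) (Idx d N) ℂ) :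
    Matrix (Idx d N) (Idx d N) ℂ :=
  Matrix.of fun i j => ρ (fun k => if b k then j k else i k) (fun k => if b k then i k else j k)

end DSym
end


namespace DSym
open Finset

variable {d N : ℕ}

lemma clip_sum (c a t : ℕ) : ∑ j ∈ Finset.range t, min c (a - j*c) = min a (t*c) := by
  induction t with
  | zero => simp
  | succ t ih =>
    rw [Finset.sum_range_succ, ih, Nat.succ_mul]
    generalize t * c = X
    omega

lemma sum_filter_lt {M : Type*} [AddCommMonoid M] (m : ℕ) (hm : m ≤ N) (F : ℕ → M) :
    ∑ j ∈ Finset.univ.filter (fun j : Fin N => (j:ℕ) < m), F (j:ℕ)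
      = ∑ k ∈ Finset.range m, F k := by
  rw [Finset.sum_filter, Fin.sum_univ_eq_sum_range (fun k => if k < m then F k else 0),
    ← Finset.sum_filter]
  congr 1
  ext k
  simp only [Finset.mem_filter, Finset.mem_range]
  omega

lemma sum_filter_ge {M : Type*} [AddCommMonoid M] (m : ℕ) (F : ℕ → M) :
    ∑ j ∈ Finset.univ.filter (fun j : Fin N => m ≤ (j:ℕ)), F ((j:ℕ) - m)
      = ∑ k ∈ Finset.range (N - m), F k := by
  rw [Finset.sum_filter, Fin.sum_univ_eq_sum_range (fun k => if m ≤ k then F (k - m) else 0),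
    ← Finset.sum_filter]
  refine Finset.sum_nbij' (i := fun k => k - m) (j := fun k => k + m) ?_ ?_ ?_ ?_ ?_ <;>
    intros <;> simp_all only [Finset.mem_filter, Finset.mem_range] <;> omega

lemma card_filter_lt (m : ℕ) (hm : m ≤ N) :
    (Finset.univ.filter (fun j : Fin N => (j:ℕ) < m)).card = m := by
  rw [Finset.card_eq_sum_ones, sum_filter_lt m hm (fun _ => 1), Finset.sum_const,
    Finset.card_range, smul_eq_mul, mul_one]

lemma card_filter_ge (m : ℕ) :
    (Finset.univ.filter (fun j : Fin N => m ≤ (j:ℕ))).card = N - m := by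
  rw [Finset.card_eq_sum_ones, sum_filter_ge m (fun _ => 1), Finset.sum_const,
    Finset.card_range, smul_eq_mul, mul_one]

lemma wsumFirst_le (m : ℕ) (hm : m ≤ N) (i : Idx d N) : wsumFirst m i ≤ m * (d-1) := by
  calc wsumFirst m i ≤ (Finset.univ.filter (fun j : Fin N => (j:ℕ) < m)).card • (d-1) :=
        Finset.sum_le_card_nsmul _ _ _ (fun j _ => by have := (i j).isLt; omega)
    _ = m * (d-1) := by rw [card_filter_lt m hm, smul_eq_mul]

lemma wsumLast_le (m : ℕ) (i : Idx d N) : wsumLast m i ≤ (N - m) * (d-1) := by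
  calc wsumLast m i ≤ (Finset.univ.filter (fun j : Fin N => m ≤ (j:ℕ))).card • (d-1) :=
        Finset.sum_le_card_nsmul _ _ _ (fun j _ => by have := (i j).isLt; omega)
    _ = (N - m) * (d-1) := by rw [card_filter_ge m, smul_eq_mul]

lemma wsum_le (i : Idx d N) : wsum i ≤ N * (d-1) := by
  calc wsum i ≤ (Finset.univ : Finset (Fin N)).card • (d-1) :=
        Finset.sum_le_card_nsmul _ _ _ (fun j _ => by have := (i j).isLt; omega)
    _ = N * (d-1) := by rw [Finset.card_univ, Fintype.card_fin, smul_eq_mul]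

lemma wsum_split (m : ℕ) (i : Idx d N) : wsum i = wsumFirst m i + wsumLast m i := by
  unfold wsum wsumFirst wsumLast
  rw [← Finset.sum_filter_add_sum_filter_not Finset.univ (fun j : Fin N => (j:ℕ) < m)]
  congr 1
  apply Finset.sum_congr _ (fun _ _ => rfl)
  ext j; simp [not_lt]

lemma wsumFirst_mix (m : ℕ) (i j : Idx d N) :
    wsumFirst m (fun k => if (k:ℕ) < m then j k else i k) = wsumFirst m j := by
  unfold wsumFirst
  refine Finset.sum_congr rfl fun k hk => ?_
  simp only [Finset.mem_filter] at hk
  simp [hk.2]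

lemma wsumLast_mix (m : ℕ) (i j : Idx d N) :
    wsumLast m (fun k => if (k:ℕ) < m then j k else i k) = wsumLast m i := by
  unfold wsumLast
  refine Finset.sum_congr rfl fun k hk => ?_
  simp only [Finset.mem_filter] at hk
  have : ¬ ((k:ℕ) < m) := by omega
  simp [this]

lemma exists_idx (hd : 1 ≤ d) (m : ℕ) (hm : m ≤ N) (a b : ℕ)
    (ha : a ≤ m*(d-1)) (hb : b ≤ (N-m)*(d-1)) :
    ∃ i : Idx d N, wsumFirst m i = a ∧ wsumLast m i = b := by
  refine ⟨fun j => if (j:ℕ) < m then ⟨min (d-1) (a - (j:ℕ)*(d-1)), by omega⟩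
                 else ⟨min (d-1) (b - ((j:ℕ)-m)*(d-1)), by omega⟩, ?_, ?_⟩
  · unfold wsumFirst
    calc ∑ j ∈ Finset.univ.filter (fun j : Fin N => (j:ℕ) < m),
          (((fun j : Fin N => if (j:ℕ) < m then (⟨min (d-1) (a - (j:ℕ)*(d-1)), by omega⟩ : Fin d)
                 else ⟨min (d-1) (b - ((j:ℕ)-m)*(d-1)), by omega⟩) j : ℕ))
        = ∑ j ∈ Finset.univ.filter (fun j : Fin N => (j:ℕ) < m), min (d-1) (a - (j:ℕ)*(d-1)) := by
          refine Finset.sum_congr rfl fun k hk => ?_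
          simp only [Finset.mem_filter] at hk
          simp [hk.2]
      _ = ∑ k ∈ Finset.range m, min (d-1) (a - k*(d-1)) := sum_filter_lt m hm (fun k => min (d-1) (a - k*(d-1)))
      _ = a := by rw [clip_sum]; omega
  · unfold wsumLast
    calc ∑ j ∈ Finset.univ.filter (fun j : Fin N => m ≤ (j:ℕ)),
          (((fun j : Fin N => if (j:ℕ) < m then (⟨min (d-1) (a - (j:ℕ)*(d-1)), by omega⟩ : Fin d)
                 else ⟨min (d-1) (b - ((j:ℕ)-m)*(d-1)), by omega⟩) j : ℕ))
        = ∑ j ∈ Finset.univ.filter (fun j : Fin N => m ≤ (j:ℕ)), min (d-1) (b - ((j:ℕ)-m)*(d-1)) := by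
          refine Finset.sum_congr rfl fun k hk => ?_
          simp only [Finset.mem_filter] at hk
          have : ¬ ((k:ℕ) < m) := by omega
          simp [this]
      _ = ∑ k ∈ Finset.range (N-m), min (d-1) (b - k*(d-1)) := sum_filter_ge m (fun k => min (d-1) (b - k*(d-1)))
      _ = b := by rw [clip_sum]; omega


lemma gamma_entry (m : ℕ) (p : ℕ → ℝ) (i j : Idx d N) :
    Gamma m (dickeDiag d N p) i j =
      if wsumFirst m i + wsumLast m j = wsumFirst m j + wsumLast m i
      then (p (wsumFirst m j + wsumLast m i) : ℂ) else 0 := by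
  have hA : wsum (fun k : Fin N => if (k:ℕ) < m then j k else i k)
      = wsumFirst m j + wsumLast m i := by
    rw [wsum_split m, wsumFirst_mix, wsumLast_mix]
  have hB : wsum (fun k : Fin N => if (k:ℕ) < m then i k else j k)
      = wsumFirst m i + wsumLast m j := by
    rw [wsum_split m, wsumFirst_mix, wsumLast_mix]
  have hAle : wsumFirst m j + wsumLast m i ≤ N * (d-1) := by
    rw [← hA]; exact wsum_le _
  unfold Gamma dickeDiag RProj Rvec
  simp only [Matrix.of_apply, Matrix.sum_apply, Matrix.smul_apply, Matrix.vecMulVec_apply,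
    Pi.star_apply, smul_eq_mul, hA, hB, apply_ite (star : ℂ → ℂ), star_one, star_zero]
  rw [Finset.sum_eq_single (wsumFirst m j + wsumLast m i)]
  · split_ifs with h1 h2 h2 <;> simp_all
  · intro k _ hk
    simp [Ne.symm hk]
  · intro h
    exact absurd (Finset.mem_range.2 (by omega)) h

lemma shift_exists (m' K : ℤ) (hK : 1 ≤ K) (s : ℤ) :
    ∃ c : ℤ, 0 ≤ s + 2*c ∧ s + 2*c ≤ K ∧ c ≤ max 0 (-s) ∧ min m' (m' + K - s) ≤ m' + c := by
  refine ⟨if 0 ≤ s then (if s ≤ K then 0 else -((s - K + 1) / 2)) else ((-s+1)/2),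
    ?_, ?_, ?_, ?_⟩ <;> split_ifs <;> omega

lemma complex_quadform_nonneg {n : ℕ} {M : Matrix (Fin n) (Fin n) ℝ} (hM : M.PosSemidef)
    (w : Fin n → ℂ) :
    0 ≤ ∑ k, ∑ k', (starRingEnd ℂ) (w k) * (M k k' : ℂ) * w k' := by
  obtain ⟨B, rfl⟩ : ∃ B : Matrix (Fin n) (Fin n) ℝ, M = Bᴴ * B := by
    open scoped MatrixOrder in
    obtain ⟨B, rfl⟩ := CStarAlgebra.nonneg_iff_eq_star_mul_self.mp hM.nonneg
    exact ⟨B, rfl⟩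
  have key : ∀ k k', ((Bᴴ * B) k k' : ℂ) = ∑ r, (B r k : ℂ) * (B r k') := by
    intro k k'
    rw [Matrix.mul_apply]
    push_cast
    simp [Matrix.conjTranspose_apply]
  have hS : ∑ k, ∑ k', (starRingEnd ℂ) (w k) * ((Bᴴ * B) k k' : ℂ) * w k'
      = ∑ r, (starRingEnd ℂ) (∑ k, (B r k : ℂ) * w k) * (∑ k, (B r k : ℂ) * w k) := by
    calc ∑ k, ∑ k', (starRingEnd ℂ) (w k) * ((Bᴴ * B) k k' : ℂ) * w k'
        = ∑ k, ∑ k', ∑ r, (starRingEnd ℂ) (w k) * ((B r k : ℂ) * (B r k')) * w k' := by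
          simp only [key, Finset.sum_mul, Finset.mul_sum]
      _ = ∑ k, ∑ r, ∑ k', (starRingEnd ℂ) (w k) * ((B r k : ℂ) * (B r k')) * w k' :=
          Finset.sum_congr rfl fun k _ => Finset.sum_comm
      _ = ∑ r, ∑ k, ∑ k', (starRingEnd ℂ) (w k) * ((B r k : ℂ) * (B r k')) * w k' :=
          Finset.sum_comm
      _ = ∑ r, (starRingEnd ℂ) (∑ k, (B r k : ℂ) * w k) * (∑ k, (B r k : ℂ) * w k) := by
          refine Finset.sum_congr rfl fun r _ => ?_
          rw [map_sum, Finset.sum_mul]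
          refine Finset.sum_congr rfl fun k _ => ?_
          rw [Finset.mul_sum]
          refine Finset.sum_congr rfl fun k' _ => ?_
          rw [map_mul, Complex.conj_ofReal]
          ring
  rw [hS]
  refine Finset.sum_nonneg fun r _ => ?_
  rw [← Complex.normSq_eq_conj_mul_self]
  exact Complex.zero_le_real.2 (Complex.normSq_nonneg _)

section
variable (d N : ℕ)

/-- fiber of indices with given first/last weights -/
def fib (m : ℕ) (ab : ℕ × ℕ) : Finset (Idx d N) :=
  Finset.univ.filter (fun i : Idx d N => (wsumFirst m i, wsumLast m i) = ab)

/-- box of possible weight pairs -/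
def box (m : ℕ) : Finset (ℕ × ℕ) :=
  (Finset.range (m*(d-1)+1)) ×ˢ (Finset.range ((N-m)*(d-1)+1))

end

lemma mem_box {m : ℕ} (hm : m ≤ N) (i : Idx d N) :
    (wsumFirst m i, wsumLast m i) ∈ box d N m := by
  simp only [box, Finset.mem_product, Finset.mem_range]
  exact ⟨Nat.lt_succ_of_le (wsumFirst_le m hm i), Nat.lt_succ_of_le (wsumLast_le m i)⟩

lemma quad_decomp (m : ℕ) (hm : m ≤ N) (p : ℕ → ℝ) (v : Idx d N → ℂ) :
    dotProduct (star v) ((Gamma m (dickeDiag d N p)).mulVec v)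
      = ∑ ab ∈ box d N m, ∑ ab' ∈ box d N m,
          (if ab.1 + ab'.2 = ab'.1 + ab.2
          then (starRingEnd ℂ) (∑ i ∈ fib d N m ab, v i) * (∑ i ∈ fib d N m ab', v i)
               * (p (ab'.1 + ab.2) : ℂ)
          else 0) := by
  classical
  have hstep : ∀ (ab ab' : ℕ × ℕ), ab ∈ box d N m → ab' ∈ box d N m →
      (∑ i ∈ fib d N m ab, ∑ j ∈ fib d N m ab',
        star (v i) * (Gamma m (dickeDiag d N p) i j * v j))
      = (if ab.1 + ab'.2 = ab'.1 + ab.2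
        then (starRingEnd ℂ) (∑ i ∈ fib d N m ab, v i) * (∑ i ∈ fib d N m ab', v i)
             * (p (ab'.1 + ab.2) : ℂ)
        else 0) := by
    intro ab ab' _ _
    have hent : ∀ i ∈ fib d N m ab, ∀ j ∈ fib d N m ab',
        Gamma m (dickeDiag d N p) i j
          = (if ab.1 + ab'.2 = ab'.1 + ab.2 then (p (ab'.1 + ab.2) : ℂ) else 0) := by
      intro i hi j hj
      simp only [fib, Finset.mem_filter] at hi hj
      rw [gamma_entry, ← hi.2, ← hj.2]
    rw [Finset.sum_congr rfl (fun i hi => Finset.sum_congr rfl (fun j hj => by rw [hent i hi j hj]))]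
    split_ifs with h
    · simp only [map_sum, Finset.sum_mul, Finset.mul_sum, starRingEnd_apply]
      rw [Finset.sum_comm]
      refine Finset.sum_congr rfl fun i _ => Finset.sum_congr rfl fun j _ => by ring
    · simp
  calc dotProduct (star v) ((Gamma m (dickeDiag d N p)).mulVec v)
      = ∑ i, ∑ j, star (v i) * (Gamma m (dickeDiag d N p) i j * v j) := by
        simp [dotProduct, Matrix.mulVec, Finset.mul_sum]
    _ = ∑ ab ∈ box d N m, ∑ i ∈ fib d N m ab, ∑ j,
          star (v i) * (Gamma m (dickeDiag d N p) i j * v j) :=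
        (Finset.sum_fiberwise_of_maps_to (fun i _ => mem_box hm i) _).symm
    _ = ∑ ab ∈ box d N m, ∑ i ∈ fib d N m ab, ∑ ab' ∈ box d N m, ∑ j ∈ fib d N m ab',
          star (v i) * (Gamma m (dickeDiag d N p) i j * v j) := by
        refine Finset.sum_congr rfl fun ab _ => Finset.sum_congr rfl fun i _ => ?_
        exact (Finset.sum_fiberwise_of_maps_to (fun j _ => mem_box hm j) _).symm
    _ = ∑ ab ∈ box d N m, ∑ ab' ∈ box d N m, ∑ i ∈ fib d N m ab, ∑ j ∈ fib d N m ab',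
          star (v i) * (Gamma m (dickeDiag d N p) i j * v j) :=
        Finset.sum_congr rfl fun ab _ => Finset.sum_comm
    _ = _ := Finset.sum_congr rfl fun ab hab => Finset.sum_congr rfl fun ab' hab' =>
        hstep ab ab' hab hab'


theorem stmt10 (d N m : ℕ) (hd : 2 ≤ d) (hm : 1 ≤ m) (hmN : 2 * m < N) (p : ℕ → ℝ)
    (hp : ∀ k ≤ N * (d - 1), 0 ≤ p k) :
    (Gamma m (dickeDiag d N p)).PosSemidef ↔
      ∀ l ≤ (N - 2 * m) * (d - 1),
        Matrix.PosSemidef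
          (Matrix.of fun k k' : Fin (m * (d - 1) + 1) => p ((k : ℕ) + (k' : ℕ) + l)) := by
  have hd1 : 1 ≤ d := by omega
  have hmle : m ≤ N := by omega
  have hsum : m * (d-1) + (N - 2*m) * (d-1) = (N - m) * (d-1) := by
    rw [← Nat.add_mul]; congr 1; omega
  have hK1 : 1 ≤ (N - 2*m) * (d-1) :=
    Nat.one_le_iff_ne_zero.2 (Nat.mul_ne_zero (by omega) (by omega))
  have hboxmem : ∀ ab ∈ box d N m, ab.1 ≤ m*(d-1) ∧ ab.2 ≤ (N-m)*(d-1) := by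
    intro ab hab
    simp only [box, Finset.mem_product, Finset.mem_range] at hab
    omega
  constructor
  · -- PSD Γ → blocks PSD
    intro hΓ l hl
    set c : ℕ → ℕ := fun a =>
      (Finset.univ.filter
        (fun i : Idx d N => (wsumFirst m i, wsumLast m i) = (a, a + l))).card with hcdef
    have hcpos : ∀ a ≤ m * (d-1), 0 < c a := by
      intro a ha
      obtain ⟨i, hi1, hi2⟩ := exists_idx hd1 m hmle a (a + l) ha (by omega)
      exact Finset.card_pos.2 ⟨i, by simp [hcdef, hi1, hi2]⟩
    refine Matrix.posSemidef_iff_dotProduct_mulVec.mpr ⟨?_, ?_⟩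
    · show _ = _
      ext k k'
      simp only [Matrix.conjTranspose_apply, Matrix.of_apply, star_trivial]
      congr 1
      omega
    · intro x
      set x' : ℕ → ℝ := fun a => if h : a < m*(d-1)+1 then x ⟨a, h⟩ else 0 with hx'def
      set y : ℕ → ℝ := fun a => x' a / (c a : ℝ) with hydef
      set v : Idx d N → ℂ := fun i =>
        if wsumLast m i = wsumFirst m i + l then ((y (wsumFirst m i) : ℝ) : ℂ) else 0 with hvdef
      have h0 := hΓ.dotProduct_mulVec_nonneg v
      rw [quad_decomp m hmle p v] at h0
      have hZ : ∀ ab ∈ box d N m, (∑ i ∈ fib d N m ab, v i)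
          = if ab.2 = ab.1 + l then (((c ab.1 : ℝ) * y ab.1 : ℝ) : ℂ) else 0 := by
        rintro ⟨a, b⟩ hab
        by_cases hb : b = a + l
        · subst hb
          rw [if_pos rfl]
          have hconst : ∀ i ∈ fib d N m (a, a + l), v i = ((y a : ℝ) : ℂ) := by
            intro i hi
            simp only [fib, Finset.mem_filter, Prod.mk.injEq] at hi
            simp only [hvdef]
            rw [hi.2.1, hi.2.2, if_pos rfl]
          rw [Finset.sum_congr rfl hconst, Finset.sum_const, nsmul_eq_mul]
          have hcard : (fib d N m (a, a + l)).card = c a := rfl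
          rw [hcard]
          push_cast
          ring
        · rw [if_neg hb]
          apply Finset.sum_eq_zero
          intro i hi
          simp only [fib, Finset.mem_filter, Prod.mk.injEq] at hi
          simp only [hvdef]
          rw [hi.2.1, hi.2.2, if_neg hb]
      have hpt : ∀ ab ∈ box d N m, ∀ ab' ∈ box d N m,
          (if ab.1 + ab'.2 = ab'.1 + ab.2
            then (starRingEnd ℂ) (∑ i ∈ fib d N m ab, v i) * (∑ i ∈ fib d N m ab', v i)
                 * (p (ab'.1 + ab.2) : ℂ) else 0)
          = (if ab.2 = ab.1 + l then (if ab'.2 = ab'.1 + l then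
              (((x' ab.1 * x' ab'.1 * p (ab.1 + ab'.1 + l)) : ℝ) : ℂ)
              else 0) else 0) := by
        intro ab hab ab' hab'
        have hxc : ∀ a, a ≤ m*(d-1) → (c a : ℝ) * y a = x' a := by
          intro a ha
          rw [hydef]
          rw [mul_comm, div_mul_cancel₀]
          exact Nat.cast_ne_zero.2 (hcpos a ha).ne'
        rw [hZ ab hab, hZ ab' hab']
        by_cases h1 : ab.2 = ab.1 + l
        · by_cases h2 : ab'.2 = ab'.1 + l
          · rw [if_pos h1, if_pos h2, if_pos h1, if_pos h2,
              if_pos (show ab.1 + ab'.2 = ab'.1 + ab.2 by omega)]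
            rw [show ab'.1 + ab.2 = ab.1 + ab'.1 + l by omega, Complex.conj_ofReal]
            rw [hxc ab.1 (hboxmem ab hab).1, hxc ab'.1 (hboxmem ab' hab').1]
            push_cast
            ring
          · rw [if_neg h2, if_neg h2]
            split_ifs <;> simp
        · rw [if_neg h1, if_neg h1]
          split_ifs <;> simp
      have hcol : ∀ X : ℕ → ℂ, (∑ ab ∈ box d N m, if ab.2 = ab.1 + l then X ab.1 else 0)
          = ∑ a ∈ Finset.range (m*(d-1)+1), X a := by
        intro X
        rw [box, Finset.sum_product]
        refine Finset.sum_congr rfl fun a ha => ?_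
        rw [Finset.sum_ite_eq' (Finset.range ((N-m)*(d-1)+1)) (a + l) (fun _ => X a)]
        rw [if_pos (Finset.mem_range.2 (by
          simp only [Finset.mem_range] at ha
          omega))]
      have hcollapse : (∑ ab ∈ box d N m, ∑ ab' ∈ box d N m,
          (if ab.2 = ab.1 + l then (if ab'.2 = ab'.1 + l then
              (((x' ab.1 * x' ab'.1 * p (ab.1 + ab'.1 + l)) : ℝ) : ℂ)
              else 0) else 0))
          = ∑ a ∈ Finset.range (m*(d-1)+1), ∑ a' ∈ Finset.range (m*(d-1)+1),
              (((x' a * x' a' * p (a + a' + l)) : ℝ) : ℂ) := by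
        rw [← hcol (fun a => ∑ a' ∈ Finset.range (m*(d-1)+1),
              (((x' a * x' a' * p (a + a' + l)) : ℝ) : ℂ))]
        refine Finset.sum_congr rfl fun ab _ => ?_
        by_cases h1 : ab.2 = ab.1 + l
        · rw [if_pos h1]
          rw [← hcol (fun a' => (((x' ab.1 * x' a' * p (ab.1 + a' + l)) : ℝ) : ℂ))]
          exact Finset.sum_congr rfl fun ab' _ => by rw [if_pos h1]
        · rw [if_neg h1]
          exact Finset.sum_eq_zero fun ab' _ => by rw [if_neg h1]
      rw [Finset.sum_congr rfl (fun ab hab => Finset.sum_congr rfl (fun ab' hab' =>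
        hpt ab hab ab' hab')), hcollapse] at h0
      have hreal : (∑ a ∈ Finset.range (m*(d-1)+1), ∑ a' ∈ Finset.range (m*(d-1)+1),
              (((x' a * x' a' * p (a + a' + l)) : ℝ) : ℂ))
          = ((∑ a ∈ Finset.range (m*(d-1)+1), ∑ a' ∈ Finset.range (m*(d-1)+1),
              (x' a * x' a' * p (a + a' + l)) : ℝ) : ℂ) := by
        push_cast
        rfl
      rw [hreal] at h0
      have h0' := Complex.zero_le_real.1 h0
      have hfin : dotProduct (star x)
          ((Matrix.of fun k k' : Fin (m * (d - 1) + 1) => p ((k : ℕ) + (k' : ℕ) + l)).mulVec x)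
          = ∑ a ∈ Finset.range (m*(d-1)+1), ∑ a' ∈ Finset.range (m*(d-1)+1),
              (x' a * x' a' * p (a + a' + l)) := by
        have e1 : dotProduct (star x)
            ((Matrix.of fun k k' : Fin (m * (d - 1) + 1) => p ((k : ℕ) + (k' : ℕ) + l)).mulVec x)
            = ∑ k : Fin (m*(d-1)+1), ∑ k' : Fin (m*(d-1)+1),
                x' (k : ℕ) * x' (k' : ℕ) * p ((k : ℕ) + (k' : ℕ) + l) := by
          simp only [dotProduct, Matrix.mulVec, Matrix.of_apply, Pi.star_apply,
            star_trivial, Finset.mul_sum]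
          refine Finset.sum_congr rfl fun k _ => Finset.sum_congr rfl fun k' _ => ?_
          rw [hx'def]
          simp only [dif_pos k.isLt, dif_pos k'.isLt, Fin.eta]
          ring
        have e2 : ∀ k : Fin (m*(d-1)+1),
            (∑ k' : Fin (m*(d-1)+1), x' (k : ℕ) * x' (k' : ℕ) * p ((k : ℕ) + (k' : ℕ) + l))
            = ∑ a' ∈ Finset.range (m*(d-1)+1), x' (k : ℕ) * x' a' * p ((k : ℕ) + a' + l) :=
          fun k => Fin.sum_univ_eq_sum_range (fun a' => x' (k : ℕ) * x' a' * p ((k : ℕ) + a' + l)) _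
        rw [e1, Finset.sum_congr rfl (fun k _ => e2 k)]
        exact Fin.sum_univ_eq_sum_range
          (fun a => ∑ a' ∈ Finset.range (m*(d-1)+1), x' a * x' a' * p (a + a' + l)) _
      rw [hfin]
      exact h0'

  · -- blocks PSD → PSD Γ
    intro hblocks
    rw [Matrix.posSemidef_iff_dotProduct_mulVec]
    constructor
    · -- Hermitian
      show _ = _
      ext i j
      rw [Matrix.conjTranspose_apply, gamma_entry, gamma_entry]
      by_cases h1 : wsumFirst m j + wsumLast m i = wsumFirst m i + wsumLast m j
      · rw [if_pos h1, if_pos (by omega), ← h1]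
        exact Complex.conj_ofReal _
      · rw [if_neg h1, if_neg (by omega), star_zero]
    · intro v
      rw [quad_decomp m hmle p v]
      set Z : ℕ × ℕ → ℂ := fun ab => ∑ i ∈ fib d N m ab, v i with hZdef
      set Fs : ℤ → Finset (ℕ × ℕ) :=
        fun s => (box d N m).filter (fun ab => (ab.2:ℤ) - (ab.1:ℤ) = s) with hFsdef
      have key : (∑ ab ∈ box d N m, ∑ ab' ∈ box d N m,
          (if ab.1 + ab'.2 = ab'.1 + ab.2
          then (starRingEnd ℂ) (Z ab) * (Z ab') * (p (ab'.1 + ab.2) : ℂ)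
          else 0))
          = ∑ s ∈ Finset.Icc (-((m*(d-1) : ℕ) : ℤ)) (((N-m)*(d-1) : ℕ) : ℤ),
              ∑ ab ∈ Fs s, ∑ ab' ∈ Fs s,
                (starRingEnd ℂ) (Z ab) * (Z ab') * (p (ab'.1 + ab.2) : ℂ) := by
        have step1 : ∀ ab ∈ box d N m,
            (∑ ab' ∈ box d N m,
              (if ab.1 + ab'.2 = ab'.1 + ab.2
                then (starRingEnd ℂ) (Z ab) * (Z ab') * (p (ab'.1 + ab.2) : ℂ) else 0))
            = ∑ ab' ∈ Fs ((ab.2:ℤ) - (ab.1:ℤ)),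
                (starRingEnd ℂ) (Z ab) * (Z ab') * (p (ab'.1 + ab.2) : ℂ) := by
          intro ab _
          rw [hFsdef]
          rw [Finset.sum_filter]
          refine Finset.sum_congr rfl fun ab' _ => ?_
          refine if_congr ?_ rfl rfl
          constructor <;> intro h <;> omega
        rw [Finset.sum_congr rfl step1]
        rw [← Finset.sum_fiberwise_of_maps_to
          (g := fun ab : ℕ × ℕ => (ab.2:ℤ) - (ab.1:ℤ))
          (t := Finset.Icc (-((m*(d-1) : ℕ) : ℤ)) (((N-m)*(d-1) : ℕ) : ℤ))
          (fun ab hab => by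
            have := hboxmem ab hab
            simp only [Finset.mem_Icc]
            omega)]
        refine Finset.sum_congr rfl fun s _ => ?_
        refine Finset.sum_congr rfl fun ab hab => ?_
        have : (ab.2:ℤ) - (ab.1:ℤ) = s := by
          rw [hFsdef] at hab
          exact (Finset.mem_filter.1 hab).2
        rw [this]
      rw [key]
      refine Finset.sum_nonneg fun s hs => ?_
      -- fix the block s
      obtain ⟨cs, hc1, hc2, hc3, hc4⟩ :=
        shift_exists ((m*(d-1) : ℕ) : ℤ) (((N - 2*m)*(d-1) : ℕ) : ℤ) (by exact_mod_cast hK1) s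
      have hsumZ : ((m*(d-1) : ℕ) : ℤ) + (((N - 2*m)*(d-1) : ℕ) : ℤ) = (((N-m)*(d-1) : ℕ) : ℤ) := by
        exact_mod_cast hsum
      have hc4' : min ((m*(d-1) : ℕ) : ℤ) ((((N-m)*(d-1) : ℕ) : ℤ) - s)
          ≤ ((m*(d-1) : ℕ) : ℤ) + cs := by omega
      set l : ℕ := (s + 2*cs).toNat with hldef
      have hlle : l ≤ (N - 2*m) * (d-1) := by omega
      have hMps := hblocks l hlle
      have habk : ∀ ab ∈ Fs s, 0 ≤ (ab.1:ℤ) - cs ∧ (ab.1:ℤ) - cs ≤ ((m*(d-1) : ℕ):ℤ) := by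
        intro ab hab
        rw [hFsdef, Finset.mem_filter] at hab
        have h1 := hboxmem ab hab.1
        have h2 := hab.2
        omega
      set g : ℕ × ℕ → Fin (m*(d-1)+1) :=
        fun ab => ⟨min (((ab.1:ℤ) - cs).toNat) (m*(d-1)), by omega⟩ with hgdef
      have hgval : ∀ ab ∈ Fs s, ((g ab : ℕ) : ℤ) = (ab.1:ℤ) - cs := by
        intro ab hab
        have h1 := habk ab hab
        have h2 : ((g ab : ℕ)) = min (((ab.1:ℤ) - cs).toNat) (m*(d-1)) := rfl
        omega
      set w : Fin (m*(d-1)+1) → ℂ := fun k => ∑ ab ∈ (Fs s).filter (fun ab => g ab = k), Z ab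
        with hwdef
      have hsplit : (∑ ab ∈ Fs s, ∑ ab' ∈ Fs s,
            (starRingEnd ℂ) (Z ab) * (Z ab') * (p (ab'.1 + ab.2) : ℂ))
          = ∑ k : Fin (m*(d-1)+1), ∑ k' : Fin (m*(d-1)+1),
              (starRingEnd ℂ) (w k) * ((Matrix.of fun k k' : Fin (m * (d - 1) + 1) =>
                p ((k : ℕ) + (k' : ℕ) + l)) k k' : ℂ) * w k' := by
        have inner : ∀ (k k' : Fin (m*(d-1)+1)),
            (∑ ab ∈ (Fs s).filter (fun ab => g ab = k),
              ∑ ab' ∈ (Fs s).filter (fun ab => g ab = k'),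
                (starRingEnd ℂ) (Z ab) * (Z ab') * (p (ab'.1 + ab.2) : ℂ))
            = (starRingEnd ℂ) (w k) * (p ((k : ℕ) + (k' : ℕ) + l) : ℂ) * w k' := by
          intro k k'
          have harg : ∀ ab ∈ (Fs s).filter (fun ab => g ab = k),
              ∀ ab' ∈ (Fs s).filter (fun ab => g ab = k'),
                ab'.1 + ab.2 = (k : ℕ) + (k' : ℕ) + l := by
            intro ab hab ab' hab'
            rw [Finset.mem_filter] at hab hab'
            have e1 := hgval ab hab.1
            have e2 := hgval ab' hab'.1
            rw [hab.2] at e1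
            rw [hab'.2] at e2
            have e3 : (ab.2:ℤ) - (ab.1:ℤ) = s := by
              have := hab.1
              rw [hFsdef, Finset.mem_filter] at this
              exact this.2
            omega
          have hrhs : (starRingEnd ℂ) (w k) * (p ((k : ℕ) + (k' : ℕ) + l) : ℂ) * w k'
              = ∑ ab ∈ (Fs s).filter (fun ab => g ab = k),
                  ∑ ab' ∈ (Fs s).filter (fun ab => g ab = k'),
                  (starRingEnd ℂ) (Z ab) * (Z ab') * (p ((k : ℕ) + (k' : ℕ) + l) : ℂ) := by
            simp only [hwdef, map_sum, Finset.sum_mul]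
            refine Finset.sum_congr rfl fun ab _ => ?_
            rw [Finset.mul_sum]
            refine Finset.sum_congr rfl fun ab' _ => by ring
          rw [hrhs]
          refine Finset.sum_congr rfl fun ab hab => Finset.sum_congr rfl fun ab' hab' => ?_
          rw [harg ab hab ab' hab']
        calc (∑ ab ∈ Fs s, ∑ ab' ∈ Fs s,
              (starRingEnd ℂ) (Z ab) * (Z ab') * (p (ab'.1 + ab.2) : ℂ))
            = ∑ k : Fin (m*(d-1)+1), ∑ ab ∈ (Fs s).filter (fun ab => g ab = k),
                ∑ ab' ∈ Fs s,
                (starRingEnd ℂ) (Z ab) * (Z ab') * (p (ab'.1 + ab.2) : ℂ) :=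
              (Finset.sum_fiberwise_of_maps_to (fun ab _ => Finset.mem_univ (g ab)) _).symm
          _ = ∑ k : Fin (m*(d-1)+1), ∑ ab ∈ (Fs s).filter (fun ab => g ab = k),
                ∑ k' : Fin (m*(d-1)+1), ∑ ab' ∈ (Fs s).filter (fun ab => g ab = k'),
                (starRingEnd ℂ) (Z ab) * (Z ab') * (p (ab'.1 + ab.2) : ℂ) := by
              refine Finset.sum_congr rfl fun k _ => Finset.sum_congr rfl fun ab _ => ?_
              exact (Finset.sum_fiberwise_of_maps_to (fun ab' _ => Finset.mem_univ (g ab')) _).symm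
          _ = ∑ k : Fin (m*(d-1)+1), ∑ k' : Fin (m*(d-1)+1),
                ∑ ab ∈ (Fs s).filter (fun ab => g ab = k),
                ∑ ab' ∈ (Fs s).filter (fun ab => g ab = k'),
                (starRingEnd ℂ) (Z ab) * (Z ab') * (p (ab'.1 + ab.2) : ℂ) :=
              Finset.sum_congr rfl fun k _ => Finset.sum_comm
          _ = ∑ k : Fin (m*(d-1)+1), ∑ k' : Fin (m*(d-1)+1),
                (starRingEnd ℂ) (w k) * (p ((k : ℕ) + (k' : ℕ) + l) : ℂ) * w k' :=
              Finset.sum_congr rfl fun k _ => Finset.sum_congr rfl fun k' _ => inner k k'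
          _ = _ := by
              refine Finset.sum_congr rfl fun k _ => Finset.sum_congr rfl fun k' _ => ?_
              rw [Matrix.of_apply]
      rw [hsplit]
      exact complex_quadform_nonneg hMps w


end DSym
end

section
/- Let N = 3 and d = 3, and let (p_k)_{k=0}^{6} = (1, 1/4, 1/8, 1/9, 1/8, 1/4, 1). Then the diagonal restricted Dicke state ρ = Σ_{k=0}^{6} p_k |R_{3,3;k}⟩⟨R_{3,3;k}| is 1-PPT but is not fully separable. In particular, for d ≥ 3 and odd N, the (N−1)/2-PPT property of diagonal restricted Dicke states does not imply full separability. -/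
open scoped BigOperators ComplexConjugate ComplexOrder Matrix
namespace DSym

section Aux

lemma psd_of_repr {n ι : Type*} [Fintype n] [Fintype ι] (M : Matrix n n ℂ)
    (c : ι → ℝ) (hc : ∀ t, 0 ≤ c t) (v : ι → n → ℂ)
    (hM : ∀ i j, M i j = ∑ t : ι, (c t : ℂ) * (v t i * conj (v t j))) :
    M.PosSemidef := by
  have comm3 : ∀ (F : n → n → ι → ℂ), (∑ i, ∑ j, ∑ t, F i j t) = ∑ t, ∑ i, ∑ j, F i j t := by
    intro F
    calc (∑ i, ∑ j, ∑ t, F i j t) = ∑ i, ∑ t, ∑ j, F i j t :=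
          Finset.sum_congr rfl fun i _ => Finset.sum_comm
    _ = ∑ t, ∑ i, ∑ j, F i j t := Finset.sum_comm
  rw [Matrix.posSemidef_iff_dotProduct_mulVec]
  constructor
  · ext i j
    rw [Matrix.conjTranspose_apply, hM, hM, star_sum]
    refine Finset.sum_congr rfl fun t _ => ?_
    simp only [star_mul', Complex.star_def, map_mul, Complex.conj_conj, Complex.conj_ofReal]
    ring
  · intro x
    have key : dotProduct (star x) (M.mulVec x)
        = ∑ t : ι, ((c t : ℂ)) * ((∑ i, conj (x i) * v t i) * conj (∑ i, conj (x i) * v t i)) := by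
      simp only [dotProduct, Matrix.mulVec, Pi.star_apply, Complex.star_def, hM,
        map_sum, map_mul, Complex.conj_conj, Finset.sum_mul, Finset.mul_sum]
      rw [comm3]
      refine Finset.sum_congr rfl fun t _ => ?_
      rw [Finset.sum_comm]
      refine Finset.sum_congr rfl fun i _ => Finset.sum_congr rfl fun j _ => ?_
      ring
    rw [key]
    have hterm : ∀ t : ι, ((c t : ℂ)) * ((∑ i, conj (x i) * v t i) * conj (∑ i, conj (x i) * v t i))
        = ((c t * Complex.normSq (∑ i, conj (x i) * v t i) : ℝ) : ℂ) := by
      intro t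
      rw [Complex.ofReal_mul, Complex.normSq_eq_conj_mul_self]
      ring
    simp only [hterm]
    rw [← Complex.ofReal_sum, Complex.zero_le_real]
    exact Finset.sum_nonneg fun t _ => mul_nonneg (hc t) (Complex.normSq_nonneg _)

lemma wsum_eq (i : Idx 3 3) : wsum i = (i 0 : ℕ) + ((i 1 : ℕ) + (i 2 : ℕ)) := by
  simp [wsum, Fin.sum_univ_three, add_assoc]

lemma wsum_lt (i : Idx 3 3) : wsum i < 3 * (3 - 1) + 1 := by
  rw [wsum_eq]
  have h0 := (i 0).isLt
  have h1 := (i 1).isLt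
  have h2 := (i 2).isLt
  omega

lemma dickeDiag_apply (p : ℕ → ℝ) (i j : Idx 3 3) :
    dickeDiag 3 3 p i j = if wsum i = wsum j then (p (wsum i) : ℂ) else 0 := by
  unfold dickeDiag RProj
  rw [Matrix.sum_apply]
  rw [Finset.sum_eq_single (wsum i)]
  · by_cases h : wsum i = wsum j
    · simp [Rvec, Matrix.vecMulVec_apply, h]
    · simp [Rvec, Matrix.vecMulVec_apply, h, Ne.symm h]
  · intro k _ hk
    simp [Rvec, Matrix.vecMulVec_apply, Ne.symm hk]
  · intro hni
    exact absurd (Finset.mem_range.2 (wsum_lt i)) hni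

lemma gamma1_apply (p : ℕ → ℝ) (i j : Idx 3 3) :
    Gamma 1 (dickeDiag 3 3 p) i j =
      if ((j 0 : ℕ) + ((i 1 : ℕ) + (i 2 : ℕ)) = (i 0 : ℕ) + ((j 1 : ℕ) + (j 2 : ℕ)))
      then (p ((j 0 : ℕ) + ((i 1 : ℕ) + (i 2 : ℕ))) : ℂ) else 0 := by
  have e1 : wsum (fun k : Fin 3 => if (k : ℕ) < 1 then j k else i k)
      = (j 0 : ℕ) + ((i 1 : ℕ) + (i 2 : ℕ)) := by
    rw [wsum_eq]; norm_num
  have e2 : wsum (fun k : Fin 3 => if (k : ℕ) < 1 then i k else j k)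
      = (i 0 : ℕ) + ((j 1 : ℕ) + (j 2 : ℕ)) := by
    rw [wsum_eq]; norm_num
  simp only [Gamma, Matrix.of_apply]
  rw [dickeDiag_apply, e1, e2]


def certS : Fin 15 → ℤ := ![-2, -1, -1, 0, 0, 0, 1, 1, 1, 2, 2, 2, 3, 3, 4]

def certA : Fin 15 → ℤ :=
  ![77112, 38556, 29988, 9639, 119, 4522, 476, 612, 62560, 952, 56, 86184, 1071, 67473, 77112]

def certW : Fin 15 → ℕ → ℤ := fun t n =>
  ((![[0,0,1],[0,2,1],[0,0,1],[8,2,1],[0,18,23],[0,0,1],[18,9,8],[0,7,10],[0,0,1],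
     [9,8,9],[0,17,90],[0,0,1],[8,9,0],[0,1,0],[1,0,0]] : Fin 15 → List ℤ) t).getD n 0

def Pz : ℕ → ℤ := fun k => ([616896, 154224, 77112, 68544, 77112, 154224, 616896] : List ℤ).getD k 0

set_option maxHeartbeats 2000000 in
lemma keyZ : ∀ (x y : Fin 3) (m1 m2 : Fin 5),
    (if ((y:ℕ) + (m1:ℕ) = (x:ℕ) + (m2:ℕ)) then Pz ((y:ℕ)+(m1:ℕ)) else 0)
    = ∑ t : Fin 15, certA t *
        ((if (((m1:ℕ) : ℤ) - ((x:ℕ) : ℤ) = certS t) then certW t (x:ℕ) else 0) *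
         (if (((m2:ℕ) : ℤ) - ((y:ℕ) : ℤ) = certS t) then certW t (y:ℕ) else 0)) := by
  decide

/-- The PSD certificate vectors. -/
def certV : Fin 15 → Idx 3 3 → ℂ := fun t i =>
  if ((((i 1 : ℕ) + (i 2 : ℕ) : ℕ)) : ℤ) - ((i 0 : ℕ) : ℤ) = certS t
  then ((certW t (i 0 : ℕ) : ℤ) : ℂ) else 0

lemma part1 (p : ℕ → ℝ)
    (hp : p = fun k => [1, 1/4, 1/8, 1/9, 1/8, 1/4, 1].getD k 0) :
    (Gamma 1 (dickeDiag 3 3 p)).PosSemidef := by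
  have hPp : ∀ m : ℕ, m < 7 → (p m : ℂ) = ((Pz m : ℤ) : ℂ) / 616896 := by
    intro m hm
    interval_cases m <;> rw [hp] <;> norm_num [Pz, List.getD]
  refine psd_of_repr _ (fun t => ((certA t : ℤ) : ℝ) / 616896) ?_ certV ?_
  · intro t
    fin_cases t <;> norm_num [certA]
  · intro i j
    rw [gamma1_apply]
    have hb1 : (i 1 : ℕ) + (i 2 : ℕ) < 5 := by
      have := (i 1).isLt; have := (i 2).isLt; omega
    have hb2 : (j 1 : ℕ) + (j 2 : ℕ) < 5 := by
      have := (j 1).isLt; have := (j 2).isLt; omega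
    have kz := keyZ (i 0) (j 0) ⟨(i 1 : ℕ) + (i 2 : ℕ), hb1⟩ ⟨(j 1 : ℕ) + (j 2 : ℕ), hb2⟩
    simp only [Fin.val_mk] at kz
    have kzc := congrArg (fun z : ℤ => ((z : ℂ))) kz
    push_cast [apply_ite (fun z : ℤ => ((z : ℂ)))] at kzc
    -- kzc : ite cond (Pz n : ℂ) 0 = ∑ t, (certA t : ℂ) * (ite c1 (certW ..) 0 * ite c2 (certW ..) 0)
    have hrhs : ∀ t : Fin 15,
        (((((certA t : ℤ) : ℝ) / 616896 : ℝ)) : ℂ) * (certV t i * conj (certV t j))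
        = ((certA t : ℤ) : ℂ) *
            ((if ((i 1 : ℕ) : ℤ) + ((i 2 : ℕ) : ℤ) - ((i 0 : ℕ) : ℤ) = certS t
                then ((certW t (i 0 : ℕ) : ℤ) : ℂ) else 0) *
             (if ((j 1 : ℕ) : ℤ) + ((j 2 : ℕ) : ℤ) - ((j 0 : ℕ) : ℤ) = certS t
                then ((certW t (j 0 : ℕ) : ℤ) : ℂ) else 0)) / 616896 := by
      intro t
      simp only [certV, apply_ite (starRingEnd ℂ), map_intCast, map_zero]
      push_cast
      ring
    rw [Finset.sum_congr rfl fun t _ => hrhs t, ← Finset.sum_div, ← kzc]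
    by_cases hcond : ((j 0 : ℕ) + ((i 1 : ℕ) + (i 2 : ℕ)) = (i 0 : ℕ) + ((j 1 : ℕ) + (j 2 : ℕ)))
    · rw [if_pos hcond, if_pos hcond, hPp _ (by omega)]
    · rw [if_neg hcond, if_neg hcond, zero_div]

lemma comm3sum {M : Type*} [AddCommMonoid M] {n1 n2 n3 : Type*}
    (s : Finset n1) (t : Finset n2) (u : Finset n3) (F : n1 → n2 → n3 → M) :
    (∑ i ∈ s, ∑ j ∈ t, ∑ k ∈ u, F i j k) = ∑ k ∈ u, ∑ i ∈ s, ∑ j ∈ t, F i j k := by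
  calc (∑ i ∈ s, ∑ j ∈ t, ∑ k ∈ u, F i j k)
      = ∑ i ∈ s, ∑ k ∈ u, ∑ j ∈ t, F i j k := Finset.sum_congr rfl fun i _ => Finset.sum_comm
    _ = ∑ k ∈ u, ∑ i ∈ s, ∑ j ∈ t, F i j k := Finset.sum_comm

noncomputable def Yw : ℕ → ℝ
  | 0 => 1 | 1 => -12 | 2 => 11 | 3 => -1 | _ => 0

def repIdx : ℕ → Idx 3 3
  | 0 => ![0,0,0] | 1 => ![1,0,0] | 2 => ![2,0,0] | 3 => ![2,1,0]
  | 4 => ![2,2,0] | 5 => ![2,2,1] | _ => ![2,2,2]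

lemma part2 (p : ℕ → ℝ)
    (hp : p = fun k => [1, 1/4, 1/8, 1/9, 1/8, 1/4, 1].getD k 0) :
    ¬ FullySep (dickeDiag 3 3 p) := by
  rintro ⟨n, lam, ξ, hlam, -, hρ⟩
  set v : Fin n → Idx 3 3 → ℂ := fun α i => ∏ j, ξ α j (i j) with hv
  have hE : ∀ i i' : Idx 3 3, dickeDiag 3 3 p i i'
      = ∑ α, (lam α : ℂ) * (v α i * conj (v α i')) := by
    intro i i'
    rw [hρ, Matrix.sum_apply]
    refine Finset.sum_congr rfl fun α _ => ?_
    simp only [Matrix.smul_apply, prodProj, Matrix.of_apply, smul_eq_mul, hv]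
    rw [Finset.prod_mul_distrib, map_prod]
  -- Step A : sector constancy
  have hsec : ∀ α (i i' : Idx 3 3), wsum i = wsum i' → v α i = v α i' := by
    intro α i i' h
    have hcomb : ∑ β, (lam β : ℂ) * ((v β i - v β i') * conj (v β i - v β i')) = 0 := by
      have hexp : ∀ β, (lam β : ℂ) * ((v β i - v β i') * conj (v β i - v β i'))
          = (lam β : ℂ) * (v β i * conj (v β i)) - (lam β : ℂ) * (v β i * conj (v β i'))
            - (lam β : ℂ) * (v β i' * conj (v β i))
            + (lam β : ℂ) * (v β i' * conj (v β i')) := by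
        intro β; simp only [map_sub]; ring
      rw [Finset.sum_congr rfl fun β _ => hexp β]
      simp only [Finset.sum_add_distrib, Finset.sum_sub_distrib]
      rw [← hE, ← hE, ← hE, ← hE]
      rw [dickeDiag_apply, dickeDiag_apply, dickeDiag_apply, dickeDiag_apply]
      rw [if_pos rfl, if_pos rfl, if_pos h, if_pos h.symm, h]
      ring
    have hreal : ∑ β, lam β * Complex.normSq (v β i - v β i') = 0 := by
      have hcast : ((∑ β, lam β * Complex.normSq (v β i - v β i') : ℝ) : ℂ) = 0 := by
        push_cast
        rw [← hcomb]
        exact Finset.sum_congr rfl fun β _ => by rw [Complex.mul_conj]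
      exact_mod_cast hcast
    have hterm := (Finset.sum_eq_zero_iff_of_nonneg
      (fun β _ => mul_nonneg (le_of_lt (hlam β)) (Complex.normSq_nonneg _))).1 hreal α
      (Finset.mem_univ α)
    have h0 : Complex.normSq (v α i - v α i') = 0 := by
      rcases mul_eq_zero.1 hterm with h' | h'
      · exact absurd h'.symm (ne_of_lt (hlam α))
      · exact h'
    exact sub_eq_zero.1 (Complex.normSq_eq_zero.1 h0)
  have hval : ∀ α (a b c : Fin 3), v α ![a,b,c] = ξ α 0 a * (ξ α 1 b * ξ α 2 c) := by
    intro α a b c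
    simp [hv, Fin.prod_univ_three, mul_assoc]
  have hprod : ∀ α (a b c a' b' c' : Fin 3),
      (a:ℕ) + ((b:ℕ)+(c:ℕ)) = (a':ℕ) + ((b':ℕ)+(c':ℕ)) →
      ξ α 0 a * (ξ α 1 b * ξ α 2 c) = ξ α 0 a' * (ξ α 1 b' * ξ α 2 c') := by
    intro α a b c a' b' c' hh
    rw [← hval, ← hval]
    refine hsec α _ _ ?_
    rw [wsum_eq, wsum_eq]
    simpa using hh
  -- moment identity for p
  have hpk : ∀ k, k < 7 → p k = ∑ α, lam α * Complex.normSq (v α (repIdx k)) := by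
    intro k hk
    have hws : wsum (repIdx k) = k := by interval_cases k <;> decide
    have hd : dickeDiag 3 3 p (repIdx k) (repIdx k) = (p k : ℂ) := by
      rw [dickeDiag_apply, if_pos rfl, hws]
    have hEk := hE (repIdx k) (repIdx k)
    rw [hd] at hEk
    have hcast : ((p k : ℝ) : ℂ) = ((∑ α, lam α * Complex.normSq (v α (repIdx k)) : ℝ) : ℂ) := by
      rw [hEk]
      push_cast
      exact Finset.sum_congr rfl fun α _ => by rw [Complex.mul_conj]
    exact_mod_cast hcast
  -- per-term nonnegativity
  have hS : ∀ α, 0 ≤ ∑ a ∈ Finset.range 4, ∑ b ∈ Finset.range 4,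
      Yw a * Yw b * Complex.normSq (v α (repIdx (a+b))) := by
    intro α
    by_cases h0 : ξ α 0 0 * (ξ α 1 0 * ξ α 2 0) = 0
    · -- degenerate case : all sectors up to 5 vanish
      have hFle : ∀ m, m ≤ 5 → v α (repIdx m) = 0 := by
        have hF0 : v α (repIdx 0) = 0 := by
          rw [show repIdx 0 = ![0,0,0] from rfl, hval]; exact h0
        have key1 : ∀ m, m ≤ 4 → v α (repIdx m) = 0 := by
          intro m hm
          rcases mul_eq_zero.1 h0 with hf | hgh
          · interval_cases m
            · exact hF0
            · rw [show repIdx 1 = ![1,0,0] from rfl,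
                hsec α ![1,0,0] ![0,1,0] (by decide), hval]; simp [hf]
            · rw [show repIdx 2 = ![2,0,0] from rfl,
                hsec α ![2,0,0] ![0,1,1] (by decide), hval]; simp [hf]
            · rw [show repIdx 3 = ![2,1,0] from rfl,
                hsec α ![2,1,0] ![0,1,2] (by decide), hval]; simp [hf]
            · rw [show repIdx 4 = ![2,2,0] from rfl,
                hsec α ![2,2,0] ![0,2,2] (by decide), hval]; simp [hf]
          · rcases mul_eq_zero.1 hgh with hg | hh0
            · interval_cases m
              · exact hF0
              · rw [show repIdx 1 = ![1,0,0] from rfl, hval]; simp [hg]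
              · rw [show repIdx 2 = ![2,0,0] from rfl, hval]; simp [hg]
              · rw [show repIdx 3 = ![2,1,0] from rfl,
                  hsec α ![2,1,0] ![2,0,1] (by decide), hval]; simp [hg]
              · rw [show repIdx 4 = ![2,2,0] from rfl,
                  hsec α ![2,2,0] ![2,0,2] (by decide), hval]; simp [hg]
            · interval_cases m
              · exact hF0
              · rw [show repIdx 1 = ![1,0,0] from rfl, hval]; simp [hh0]
              · rw [show repIdx 2 = ![2,0,0] from rfl, hval]; simp [hh0]
              · rw [show repIdx 3 = ![2,1,0] from rfl, hval]; simp [hh0]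
              · rw [show repIdx 4 = ![2,2,0] from rfl, hval]; simp [hh0]
        intro m hm
        rcases Nat.lt_or_ge m 5 with hm5 | hm5
        · exact key1 m (by omega)
        · have hm5' : m = 5 := by omega
          subst hm5'
          have h412 : ξ α 0 1 * (ξ α 1 1 * ξ α 2 2) = 0 := by
            rw [← hval α 1 1 2, hsec α ![1,1,2] ![2,2,0] (by decide),
              ← show repIdx 4 = ![2,2,0] from rfl]
            exact key1 4 (by omega)
          rcases mul_eq_zero.1 h412 with hf1 | hgh1
          · rw [show repIdx 5 = ![2,2,1] from rfl,
              hsec α ![2,2,1] ![1,2,2] (by decide), hval]; simp [hf1]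
          · rcases mul_eq_zero.1 hgh1 with hg1 | hh2
            · rw [show repIdx 5 = ![2,2,1] from rfl,
                hsec α ![2,2,1] ![2,1,2] (by decide), hval]; simp [hg1]
            · rw [show repIdx 5 = ![2,2,1] from rfl,
                hsec α ![2,2,1] ![1,2,2] (by decide), hval]; simp [hh2]
      refine Finset.sum_nonneg fun a ha => Finset.sum_nonneg fun b hb => ?_
      rw [Finset.mem_range] at ha hb
      by_cases hab : a + b ≤ 5
      · rw [hFle (a+b) hab]; simp
      · have ha3 : a = 3 ∧ b = 3 := by omega
        rw [ha3.1, ha3.2]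
        have hY : Yw 3 * Yw 3 = 1 := by norm_num [Yw]
        rw [hY, one_mul]
        exact Complex.normSq_nonneg _
    · -- geometric case
      obtain ⟨hf0, hg0, hh0⟩ : ξ α 0 0 ≠ 0 ∧ ξ α 1 0 ≠ 0 ∧ ξ α 2 0 ≠ 0 := by
        rcases mul_ne_zero_iff.1 h0 with ⟨hf, hgh⟩
        rcases mul_ne_zero_iff.1 hgh with ⟨hg, hhh⟩
        exact ⟨hf, hg, hhh⟩
      set z := ξ α 0 1 / ξ α 0 0 with hz
      have t_g1 : ξ α 1 1 * ξ α 0 0 = ξ α 1 0 * ξ α 0 1 := by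
        have e := hprod α 0 1 0 1 0 0 (by decide)
        exact mul_right_cancel₀ hh0 (by linear_combination e)
      have t_h1 : ξ α 2 1 * ξ α 0 0 = ξ α 2 0 * ξ α 0 1 := by
        have e := hprod α 0 0 1 1 0 0 (by decide)
        exact mul_right_cancel₀ hg0 (by linear_combination e)
      have t_f2 : ξ α 0 2 * ξ α 0 0 = ξ α 0 1 * ξ α 0 1 := by
        have e := hprod α 2 0 0 1 1 0 (by decide)
        have u1 : ξ α 0 2 * ξ α 1 0 = ξ α 0 1 * ξ α 1 1 :=
          mul_right_cancel₀ hh0 (by linear_combination e)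
        exact mul_right_cancel₀ hg0
          (by linear_combination ξ α 0 0 * u1 + ξ α 0 1 * t_g1)
      have t_g2 : ξ α 1 2 * (ξ α 0 0 * ξ α 0 0) = ξ α 1 0 * (ξ α 0 1 * ξ α 0 1) := by
        have e := hprod α 0 2 0 1 1 0 (by decide)
        have u2 : ξ α 0 0 * ξ α 1 2 = ξ α 0 1 * ξ α 1 1 :=
          mul_right_cancel₀ hh0 (by linear_combination e)
        linear_combination ξ α 0 0 * u2 + ξ α 0 1 * t_g1
      have t_h2 : ξ α 2 2 * (ξ α 0 0 * ξ α 0 0) = ξ α 2 0 * (ξ α 0 1 * ξ α 0 1) := by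
        have e := hprod α 0 0 2 1 0 1 (by decide)
        have u3 : ξ α 0 0 * ξ α 2 2 = ξ α 0 1 * ξ α 2 1 :=
          mul_right_cancel₀ hg0 (by linear_combination e)
        linear_combination ξ α 0 0 * u3 + ξ α 0 1 * t_h1
      have hf1z : ξ α 0 1 = ξ α 0 0 * z := by rw [hz]; field_simp
      have hg1z : ξ α 1 1 = ξ α 1 0 * z := by
        rw [hz]; field_simp; linear_combination t_g1
      have hh1z : ξ α 2 1 = ξ α 2 0 * z := by
        rw [hz]; field_simp; linear_combination t_h1
      have hf2z : ξ α 0 2 = ξ α 0 0 * z^2 := by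
        rw [hz]; field_simp; linear_combination t_f2
      have hg2z : ξ α 1 2 = ξ α 1 0 * z^2 := by
        rw [hz]; field_simp; linear_combination t_g2
      have hh2z : ξ α 2 2 = ξ α 2 0 * z^2 := by
        rw [hz]; field_simp; linear_combination t_h2
      have hFk : ∀ k, k < 7 → v α (repIdx k)
          = (ξ α 0 0 * (ξ α 1 0 * ξ α 2 0)) * z^k := by
        intro k hk
        interval_cases k
        · rw [show repIdx 0 = ![0,0,0] from rfl, hval]; ring
        · rw [show repIdx 1 = ![1,0,0] from rfl, hval, hf1z]; ring
        · rw [show repIdx 2 = ![2,0,0] from rfl, hval, hf2z]; ring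
        · rw [show repIdx 3 = ![2,1,0] from rfl, hval, hf2z, hg1z]; ring
        · rw [show repIdx 4 = ![2,2,0] from rfl, hval, hf2z, hg2z]; ring
        · rw [show repIdx 5 = ![2,2,1] from rfl, hval, hf2z, hg2z, hh1z]; ring
        · rw [show repIdx 6 = ![2,2,2] from rfl, hval, hf2z, hg2z, hh2z]; ring
      have hfact : (∑ a ∈ Finset.range 4, ∑ b ∈ Finset.range 4,
            Yw a * Yw b * Complex.normSq (v α (repIdx (a+b))))
          = Complex.normSq (ξ α 0 0 * (ξ α 1 0 * ξ α 2 0)) *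
            ((∑ a ∈ Finset.range 4, Yw a * Complex.normSq z ^ a) *
             (∑ b ∈ Finset.range 4, Yw b * Complex.normSq z ^ b)) := by
        rw [Finset.sum_mul_sum, Finset.mul_sum]
        refine Finset.sum_congr rfl fun a ha => ?_
        rw [Finset.mul_sum]
        refine Finset.sum_congr rfl fun b hb => ?_
        rw [Finset.mem_range] at ha hb
        rw [hFk (a+b) (by omega), Complex.normSq_mul, map_pow, pow_add]
        ring
      rw [hfact]
      exact mul_nonneg (Complex.normSq_nonneg _) (mul_self_nonneg _)
  -- final contradiction
  have hT0 : 0 ≤ ∑ a ∈ Finset.range 4, ∑ b ∈ Finset.range 4, Yw a * Yw b * p (a+b) := by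
    have step1 : (∑ a ∈ Finset.range 4, ∑ b ∈ Finset.range 4, Yw a * Yw b * p (a+b))
        = ∑ α, ∑ a ∈ Finset.range 4, ∑ b ∈ Finset.range 4,
            Yw a * Yw b * (lam α * Complex.normSq (v α (repIdx (a+b)))) := by
      rw [← comm3sum]
      refine Finset.sum_congr rfl fun a ha => ?_
      refine Finset.sum_congr rfl fun b hb => ?_
      rw [Finset.mem_range] at ha hb
      rw [hpk (a+b) (by omega), Finset.mul_sum]
    rw [step1]
    refine Finset.sum_nonneg fun α _ => ?_
    have step2 : (∑ a ∈ Finset.range 4, ∑ b ∈ Finset.range 4,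
          Yw a * Yw b * (lam α * Complex.normSq (v α (repIdx (a+b)))))
        = lam α * ∑ a ∈ Finset.range 4, ∑ b ∈ Finset.range 4,
            Yw a * Yw b * Complex.normSq (v α (repIdx (a+b))) := by
      rw [Finset.mul_sum]
      refine Finset.sum_congr rfl fun a _ => ?_
      rw [Finset.mul_sum]
      refine Finset.sum_congr rfl fun b _ => ?_
      ring
    rw [step2]
    exact mul_nonneg (hlam α).le (hS α)
  have hTneg : (∑ a ∈ Finset.range 4, ∑ b ∈ Finset.range 4, Yw a * Yw b * p (a+b)) < 0 := by
    rw [hp]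
    norm_num [Finset.sum_range_succ, Yw, List.getD]
  linarith

end Aux


theorem stmt18 (p : ℕ → ℝ)
    (hp : p = fun k => [1, 1/4, 1/8, 1/9, 1/8, 1/4, 1].getD k 0) :
    (Gamma 1 (dickeDiag 3 3 p)).PosSemidef ∧ ¬ FullySep (dickeDiag 3 3 p) :=
  ⟨part1 p hp, part2 p hp⟩

end DSym
end
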